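/- Let G be a 2-homogeneous but not 2-transitive permutation group on an infinite set X. Then there is a G-invariant tournament on X whose arc set is one of the two G-orbits on ordered pairs of distinct elements, and G acts locally rigidly on X. -/

import Mathlib

def IsTournament {X : Type*} (r : X → X → Prop) : Prop :=
  (∀ x, ¬ r x x) ∧ ∀ x y : X, x ≠ y → (r x y ↔ ¬ r y x)

namespace Stmt18Aux

attribute [local instance] Classical.propDecidable

set_option linter.unusedSectionVars false

variable {X : Type*} [DecidableEq X]

/-- In an infinite subset of a tournament one can find an `r`-increasing
chain of any finite length. -/
lemma exists_chain (r : X → X → Prop)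
    (htot : ∀ x y : X, x ≠ y → r x y ∨ r y x) :
    ∀ (n : ℕ) (S : Set X), S.Infinite →
      ∃ l : List X, l.length = n ∧ l.Pairwise r ∧ ∀ x ∈ l, x ∈ S := by
  intro n
  induction n with
  | zero => exact fun S _ => ⟨[], rfl, List.Pairwise.nil, by simp⟩
  | succ n ih =>
    intro S hS
    obtain ⟨x, hx⟩ := hS.nonempty
    have hsplit : (S \ {x}) ⊆ {w | w ∈ S ∧ r x w} ∪ {w | w ∈ S ∧ r w x} := by
      rintro w ⟨hw, hwx⟩
      have hne : x ≠ w := fun h => hwx (by simp [h.symm])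
      rcases htot x w hne with h | h
      · exact Or.inl ⟨hw, h⟩
      · exact Or.inr ⟨hw, h⟩
    have hun : ({w | w ∈ S ∧ r x w} ∪ {w | w ∈ S ∧ r w x}).Infinite :=
      ((hS.diff (Set.finite_singleton x)).mono hsplit)
    rcases Set.infinite_union.1 hun with hO | hI
    · obtain ⟨l, hlen, hpw, hmem⟩ := ih _ hO
      refine ⟨x :: l, by simp [hlen], ?_, ?_⟩
      · exact List.pairwise_cons.2 ⟨fun y hy => (hmem y hy).2, hpw⟩
      · intro y hy
        rcases List.mem_cons.1 hy with rfl | hy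
        · exact hx
        · exact (hmem y hy).1
    · obtain ⟨l, hlen, hpw, hmem⟩ := ih _ hI
      refine ⟨l ++ [x], by simp [hlen], ?_, ?_⟩
      · refine List.pairwise_append.2 ⟨hpw, by simp, ?_⟩
        intro y hy z hz
        rcases List.mem_singleton.1 hz with rfl
        exact (hmem y hy).2
      · intro y hy
        rcases List.mem_append.1 hy with hy | hy
        · exact (hmem y hy).1
        · rcases List.mem_singleton.1 hy with rfl; exact hx

lemma chain_nodup (r : X → X → Prop) (hirr : ∀ x, ¬ r x x)
    {l : List X} (hl : l.Pairwise r) : l.Nodup :=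
  hl.imp (fun {a b} h => by rintro rfl; exact hirr _ h)

/-- Refine an infinite set so that it is uniform over a finite set `W`. -/
lemma exists_uniform (r : X → X → Prop)
    (htot : ∀ x y : X, x ≠ y → r x y ∨ r y x) :
    ∀ (W : Finset X) (S : Set X), S.Infinite →
      ∃ S' : Set X, S' ⊆ S ∧ S'.Infinite ∧
        ∀ p ∈ W, (∀ w ∈ S', r p w) ∨ (∀ w ∈ S', r w p) := by
  intro W
  induction W using Finset.induction with
  | empty => intro S hS; exact ⟨S, le_refl _, hS, by simp⟩
  | @insert p W hp ih =>
    intro S hS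
    obtain ⟨S', hsub, hinf, hunif⟩ := ih S hS
    have hsplit : (S' \ {p}) ⊆ {w | w ∈ S' ∧ r p w} ∪ {w | w ∈ S' ∧ r w p} := by
      rintro w ⟨hw, hwx⟩
      have hne : p ≠ w := fun h => hwx (by simp [h.symm])
      rcases htot p w hne with h | h
      · exact Or.inl ⟨hw, h⟩
      · exact Or.inr ⟨hw, h⟩
    have hun : ({w | w ∈ S' ∧ r p w} ∪ {w | w ∈ S' ∧ r w p}).Infinite :=
      ((hinf.diff (Set.finite_singleton p)).mono hsplit)
    rcases Set.infinite_union.1 hun with hO | hI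
    · refine ⟨{w | w ∈ S' ∧ r p w}, fun w hw => hsub hw.1, hO, ?_⟩
      intro q hq
      rcases Finset.mem_insert.1 hq with rfl | hq
      · exact Or.inl fun w hw => hw.2
      · rcases hunif q hq with h | h
        · exact Or.inl fun w hw => h w hw.1
        · exact Or.inr fun w hw => h w hw.1
    · refine ⟨{w | w ∈ S' ∧ r w p}, fun w hw => hsub hw.1, hI, ?_⟩
      intro q hq
      rcases Finset.mem_insert.1 hq with rfl | hq
      · exact Or.inr fun w hw => hw.2
      · rcases hunif q hq with h | h
        · exact Or.inl fun w hw => h w hw.1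
        · exact Or.inr fun w hw => h w hw.1

/-- Out-degree of `x` towards the finite set `T`. -/
noncomputable def out (r : X → X → Prop) (T : Finset X) (x : X) : ℕ :=
  (T.filter (fun e => r x e)).card

lemma out_le_card (r : X → X → Prop) (T : Finset X) (x : X) :
    out r T x ≤ T.card := Finset.card_le_card (Finset.filter_subset _ _)

/-- Within a chain, the internal out-degree is injective. -/
lemma chain_out_inj (r : X → X → Prop) (hirr : ∀ x, ¬ r x x)
    (hasym : ∀ x y : X, r x y → ¬ r y x) :
    ∀ (l : List X), l.Pairwise r → ∀ x ∈ l, ∀ y ∈ l,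
      out r l.toFinset x = out r l.toFinset y → x = y := by
  intro l
  induction l with
  | nil => intro _ x hx; exact absurd hx List.not_mem_nil
  | cons a tl ih =>
    intro hpw x hx y hy hout
    have hnd : (a :: tl).Nodup := chain_nodup r hirr hpw
    have ha : ∀ e ∈ tl, r a e := (List.pairwise_cons.1 hpw).1
    have htl : tl.Pairwise r := (List.pairwise_cons.1 hpw).2
    have hvala : out r (a :: tl).toFinset a = tl.length := by
      have h1 : (a :: tl).toFinset.filter (fun e => r a e) = tl.toFinset := by
        ext e
        simp only [Finset.mem_filter, List.toFinset_cons, Finset.mem_insert,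
          List.mem_toFinset]
        constructor
        · rintro ⟨rfl | he, hr⟩
          · exact absurd hr (hirr _)
          · exact he
        · intro he; exact ⟨Or.inr he, ha e he⟩
      rw [out, h1, List.card_toFinset, (List.nodup_cons.1 hnd).2.dedup]
    have hvaltl : ∀ z ∈ tl, out r (a :: tl).toFinset z = out r tl.toFinset z ∧
        out r (a :: tl).toFinset z < tl.length := by
      intro z hz
      have hza : ¬ r z a := hasym a z (ha z hz)
      have h1 : (a :: tl).toFinset.filter (fun e => r z e)
          = tl.toFinset.filter (fun e => r z e) := by
        ext e
        simp only [Finset.mem_filter, List.toFinset_cons, Finset.mem_insert,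
          List.mem_toFinset]
        constructor
        · rintro ⟨rfl | he, hr⟩
          · exact absurd hr hza
          · exact ⟨he, hr⟩
        · rintro ⟨he, hr⟩; exact ⟨Or.inr he, hr⟩
      have h2 : tl.toFinset.filter (fun e => r z e) ⊆ tl.toFinset.erase z := by
        intro e he
        rcases Finset.mem_filter.1 he with ⟨he1, he2⟩
        refine Finset.mem_erase.2 ⟨?_, he1⟩
        rintro rfl; exact hirr _ he2
      have h3 : (tl.toFinset.erase z).card < tl.toFinset.card :=
        Finset.card_erase_lt_of_mem (List.mem_toFinset.2 hz)
      have h4 : tl.toFinset.card = tl.length := by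
        rw [List.card_toFinset, (List.nodup_cons.1 hnd).2.dedup]
      constructor
      · rw [out, h1]; rfl
      · rw [out, h1]
        calc (tl.toFinset.filter (fun e => r z e)).card
            ≤ (tl.toFinset.erase z).card := Finset.card_le_card h2
          _ < tl.length := by rw [← h4]; exact h3
    rcases List.mem_cons.1 hx with hx' | hx' <;> rcases List.mem_cons.1 hy with hy' | hy'
    · rw [hx', hy']
    · exfalso
      subst hx'
      have := (hvaltl y hy').2
      omega
    · exfalso
      subst hy'
      have := (hvaltl x hx').2
      omega
    · exact ih htl x hx' y hy' (by
        rw [← (hvaltl x hx').1, ← (hvaltl y hy').1, hout])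

/-- Union of a list of finsets. -/
def bigU : List (Finset X) → Finset X
  | [] => ∅
  | T :: Ts => T ∪ bigU Ts

lemma mem_bigU {L : List (Finset X)} {x : X} : x ∈ bigU L ↔ ∃ T ∈ L, x ∈ T := by
  induction L with
  | nil => simp [bigU]
  | cons T Ts ih => simp [bigU, ih]

lemma bigU_append (A B : List (Finset X)) : bigU (A ++ B) = bigU A ∪ bigU B := by
  induction A with
  | nil => simp [bigU]
  | cons T Ts ih => simp [bigU, ih, Finset.union_assoc]

lemma out_union (r : X → X → Prop) {A B : Finset X} (h : Disjoint A B) (x : X) :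
    out r (A ∪ B) x = out r A x + out r B x := by
  unfold out
  rw [Finset.filter_union, Finset.card_union_of_disjoint
    (h.mono (Finset.filter_subset _ _) (Finset.filter_subset _ _))]

/-- The main construction: a sequence of uniform chains, one inside each
prescribed "between" set, with strictly growing sizes. -/
lemma build (r : X → X → Prop) (hirr : ∀ x, ¬ r x x)
    (htot : ∀ x y : X, x ≠ y → r x y ∨ r y x)
    (hbetween : ∀ x y : X, r x y → {w | r x w ∧ r w y}.Infinite) :
    ∀ (ps : List (X × X)) (W : Finset X), (∀ p ∈ ps, r p.1 p.2) →
    ∃ Ts : List (Finset X), Ts.length = ps.length ∧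
      (∀ T ∈ Ts, ∃ l : List X, l.Pairwise r ∧ l.toFinset = T) ∧
      (∀ j (hj : j < Ts.length), Disjoint (W ∪ bigU (Ts.take j)) (Ts[j]'hj)) ∧
      (∀ j (hj : j < Ts.length), ∀ x ∈ W ∪ bigU (Ts.take j),
        (∀ e ∈ Ts[j]'hj, r x e) ∨ (∀ e ∈ Ts[j]'hj, r e x)) ∧
      (∀ j (hj : j < Ts.length), (W ∪ bigU (Ts.take j)).card < (Ts[j]'hj).card) ∧
      (∀ j (hj : j < Ts.length) (hj' : j < ps.length), ∀ e ∈ Ts[j]'hj,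
        r (ps[j]'hj').1 e ∧ r e (ps[j]'hj').2) := by
  intro ps
  induction ps with
  | nil =>
    intro W _
    refine ⟨[], rfl, by simp, ?_, ?_, ?_, ?_⟩ <;>
      · intro j hj; exact absurd hj (by simp)
  | cons pq ps ih =>
    intro W hps
    have hrpq : r pq.1 pq.2 := hps pq List.mem_cons_self
    have hS : ({w | r pq.1 w ∧ r w pq.2} \ ↑W).Infinite :=
      (hbetween _ _ hrpq).diff W.finite_toSet
    obtain ⟨S2, hS2sub, hS2inf, hS2unif⟩ := exists_uniform r htot W _ hS
    obtain ⟨l, hlen, hpw, hmem⟩ := exists_chain r htot (W.card + 1) S2 hS2inf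
    have hnd := chain_nodup r hirr hpw
    set T := l.toFinset with hT
    have hTcard : T.card = W.card + 1 := by
      rw [hT, List.card_toFinset, hnd.dedup, hlen]
    have hTmem : ∀ e ∈ T, e ∈ S2 := fun e he => hmem e (List.mem_toFinset.1 he)
    have hTS : ∀ e ∈ T, (r pq.1 e ∧ r e pq.2) ∧ e ∉ W := by
      intro e he
      have h1 := hS2sub (hTmem e he)
      exact ⟨h1.1, fun hw => h1.2 (by simpa using hw)⟩
    obtain ⟨Ts, hlen2, hchains, hdisj, hunif, hsize, hpairs⟩ :=
      ih (W ∪ T) (fun p hp => hps p (List.mem_cons_of_mem _ hp))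
    refine ⟨T :: Ts, by simp [hlen2], ?_, ?_, ?_, ?_, ?_⟩
    · intro T' hT'
      rcases List.mem_cons.1 hT' with rfl | hT'
      · exact ⟨l, hpw, rfl⟩
      · exact hchains T' hT'
    · intro j hj
      cases j with
      | zero =>
        simp only [List.take_zero, List.getElem_cons_zero, bigU, Finset.union_empty]
        exact Finset.disjoint_left.2 (fun x hx hxT => (hTS x hxT).2 hx)
      | succ j =>
        have hj2 : j < Ts.length := by simpa using hj
        have h1 := hdisj j hj2
        simp only [List.take_succ_cons, List.getElem_cons_succ, bigU]
        rwa [← Finset.union_assoc]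
    · intro j hj x hx
      cases j with
      | zero =>
        simp only [List.take_zero, bigU, Finset.union_empty] at hx
        simp only [List.getElem_cons_zero]
        rcases hS2unif x hx with h | h
        · exact Or.inl (fun e he => h e (hTmem e he))
        · exact Or.inr (fun e he => h e (hTmem e he))
      | succ j =>
        have hj2 : j < Ts.length := by simpa using hj
        simp only [List.take_succ_cons, bigU] at hx
        rw [← Finset.union_assoc] at hx
        simpa only [List.getElem_cons_succ] using hunif j hj2 x hx
    · intro j hj
      cases j with
      | zero =>
        simp only [List.take_zero, bigU, Finset.union_empty, List.getElem_cons_zero]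
        omega
      | succ j =>
        have hj2 : j < Ts.length := by simpa using hj
        have h1 := hsize j hj2
        simp only [List.take_succ_cons, List.getElem_cons_succ, bigU]
        rwa [← Finset.union_assoc]
    · intro j hj hj' e he
      cases j with
      | zero =>
        simp only [List.getElem_cons_zero] at he ⊢
        exact (hTS e he).1
      | succ j =>
        have hj2 : j < Ts.length := by simpa using hj
        have hj2' : j < ps.length := by simpa using hj'
        simpa only [List.getElem_cons_succ] using hpairs j hj2 hj2' e he

/-- Local rigidity from the tournament structure: every finite set `U`
extends to a finite `V` such that any injective `r`-morphism stabilizing `V`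
setwise fixes `U` pointwise. -/
theorem rigid (r : X → X → Prop) (hirr : ∀ x, ¬ r x x)
    (hasym : ∀ x y : X, r x y → ¬ r y x)
    (htot : ∀ x y : X, x ≠ y → r x y ∨ r y x)
    (hbetween : ∀ x y : X, r x y → {w | r x w ∧ r w y}.Infinite)
    (U : Finset X) :
    ∃ V : Finset X, U ⊆ V ∧ ∀ f : X → X, Function.Injective f →
      (∀ x y : X, r x y → r (f x) (f y)) → V.image f = V → ∀ x ∈ U, f x = x := by
  classical
  -- the list of r-oriented pairs of U
  set ps : List (X × X) := (U.toList.product U.toList).filter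
      (fun pq => decide (r pq.1 pq.2)) with hps
  have hpsr : ∀ p ∈ ps, r p.1 p.2 := by
    intro p hp
    have h1 := (List.mem_filter.1 hp).2
    exact of_decide_eq_true h1
  have hpscover : ∀ u v : X, u ∈ U → v ∈ U → r u v → (u, v) ∈ ps := by
    intro u v hu hv huv
    refine List.mem_filter.2 ⟨?_, by simp [huv]⟩
    exact List.mem_product.2 ⟨Finset.mem_toList.2 hu, Finset.mem_toList.2 hv⟩
  obtain ⟨Ts, hlen, hchains, hdisj0, hunif0, hsize0, hpairs0⟩ :=
    build r hirr htot hbetween ps U hpsr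
  set R := Ts.length with hR
  -- blocks, prefixes
  set Tg : ℕ → Finset X := fun i => Ts.getD i ∅ with hTg
  have hTgget : ∀ i (hi : i < R), Tg i = Ts[i]'hi := fun i hi =>
    List.getD_eq_getElem Ts ∅ hi
  set P : ℕ → Finset X := fun c => U ∪ bigU (Ts.take c) with hP
  set V : Finset X := U ∪ bigU Ts with hV
  have hPV : P R = V := by
    have h1 : List.take R Ts = Ts := by rw [hR]; exact List.take_length
    simp only [hP, hV, h1]
  have hPmono : ∀ {c c' : ℕ}, c ≤ c' → P c ⊆ P c' := by
    intro c c' hcc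
    simp only [hP]
    apply Finset.union_subset_union_right
    intro x hx
    rcases mem_bigU.1 hx with ⟨T, hT, hxT⟩
    have h2 : Ts.take c = (Ts.take c').take c := by
      rw [List.take_take, min_eq_left hcc]
    exact mem_bigU.2 ⟨T, List.take_subset _ _ (h2 ▸ hT), hxT⟩
  have hPsucc : ∀ c, c < R → P (c + 1) = P c ∪ Tg c := by
    intro c hc
    simp only [hP]
    rw [List.take_succ, Finset.union_assoc]
    congr 1
    rw [bigU_append]
    congr 1
    have : Ts[c]? = some (Ts[c]'hc) := List.getElem?_eq_getElem hc
    rw [this]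
    simp [bigU, hTgget c hc]
  have hPdisj : ∀ c, c < R → Disjoint (P c) (Tg c) := by
    intro c hc
    rw [hTgget c hc]
    exact hdisj0 c hc
  have hPsize : ∀ c, c < R → (P c).card < (Tg c).card := by
    intro c hc
    rw [hTgget c hc]
    exact hsize0 c hc
  have hPunif : ∀ c, c < R → ∀ x ∈ P c,
      (∀ e ∈ Tg c, r x e) ∨ (∀ e ∈ Tg c, r e x) := by
    intro c hc x hx
    rw [hTgget c hc]
    exact hunif0 c hc x hx
  have hUP : ∀ c, U ⊆ P c := fun c => Finset.subset_union_left
  have hTgP : ∀ i, i < R → Tg i ⊆ P (i + 1) := by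
    intro i hi
    rw [hPsucc i hi]
    exact Finset.subset_union_right
  have hUV : U ⊆ V := Finset.subset_union_left
  have hmemV : ∀ x ∈ V, x ∈ U ∨ ∃ i, ∃ (_ : i < R), x ∈ Tg i := by
    intro x hx
    rcases Finset.mem_union.1 hx with hx | hx
    · exact Or.inl hx
    · rcases mem_bigU.1 hx with ⟨T, hT, hxT⟩
      rcases List.mem_iff_getElem.1 hT with ⟨i, hi, rfl⟩
      exact Or.inr ⟨i, hi, by rwa [hTgget i hi]⟩
  have houtP : ∀ c, c < R → ∀ x, out r (P (c+1)) x = out r (P c) x + out r (Tg c) x := by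
    intro c hc x
    rw [hPsucc c hc]
    exact out_union r (hPdisj c hc) x
  -- bit dichotomy for points in an earlier prefix
  have hbit : ∀ c, c < R → ∀ x ∈ P c,
      out r (Tg c) x = 0 ∨ out r (Tg c) x = (Tg c).card := by
    intro c hc x hx
    rcases hPunif c hc x hx with h | h
    · refine Or.inr ?_
      unfold out
      rw [Finset.filter_true_of_mem h]
    · refine Or.inl ?_
      unfold out
      rw [Finset.card_eq_zero, Finset.filter_eq_empty_iff]
      intro e he
      exact hasym _ _ (h e he)
  refine ⟨V, hUV, ?_⟩
  intro f hinj hfr hfV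
  -- f maps V to V
  have hfmem : ∀ x ∈ V, f x ∈ V := by
    intro x hx
    rw [← hfV]
    exact Finset.mem_image_of_mem f hx
  -- score and its invariance
  set score : X → ℕ := fun x => out r V x with hscore
  have hrback : ∀ x w : X, x ∈ V → w ∈ V → r (f x) (f w) → r x w := by
    intro x w _ _ hfxw
    rcases eq_or_ne x w with rfl | hne
    · exact absurd hfxw (hirr _)
    rcases htot x w hne with h | h
    · exact h
    · exact absurd hfxw (hasym _ _ (hfr _ _ h))
  have hscoref : ∀ x ∈ V, score (f x) = score x := by
    intro x hx
    have himg : V.filter (fun e => r (f x) e) = (V.filter (fun e => r x e)).image f := by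
      ext e
      simp only [Finset.mem_filter, Finset.mem_image]
      constructor
      · rintro ⟨heV, hre⟩
        have : e ∈ V.image f := by rw [hfV]; exact heV
        rcases Finset.mem_image.1 this with ⟨w, hw, rfl⟩
        exact ⟨w, ⟨hw, hrback x w hx hw hre⟩, rfl⟩
      · rintro ⟨w, ⟨hw, hrw⟩, rfl⟩
        exact ⟨hfmem w hw, hfr _ _ hrw⟩
    simp only [hscore, out]
    rw [himg, Finset.card_image_of_injective _ hinj]
  -- the peel-off lemma (digit argument)
  have peel : ∀ (d : ℕ) (x y : X) (cx cy : ℕ), x ∈ P cx → y ∈ P cy →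
      score x = score y → ∀ c, cx ≤ c → cy ≤ c → c + d = R →
      out r (P c) x = out r (P c) y := by
    intro d
    induction d with
    | zero =>
      intro x y cx cy hx hy hsc c _ _ hc
      have : c = R := by omega
      rw [this, hPV]
      exact hsc
    | succ d ih =>
      intro x y cx cy hx hy hsc c hcx hcy hc
      have hcR : c < R := by omega
      have hup := ih x y cx cy hx hy hsc (c+1) (by omega) (by omega) (by omega)
      rw [houtP c hcR x, houtP c hcR y] at hup
      have hbx := hbit c hcR x (hPmono hcx hx)
      have hby := hbit c hcR y (hPmono hcy hy)
      have hox := out_le_card r (P c) x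
      have hoy := out_le_card r (P c) y
      have hsz := hPsize c hcR
      omega
  -- equality of bits
  have bits : ∀ (x y : X) (cx cy : ℕ), x ∈ P cx → y ∈ P cy →
      score x = score y → ∀ c, cx ≤ c → cy ≤ c → c < R →
      out r (Tg c) x = out r (Tg c) y := by
    intro x y cx cy hx hy hsc c hcx hcy hcR
    have h1 := peel (R - c) x y cx cy hx hy hsc c hcx hcy (by omega)
    have h2 := peel (R - (c+1)) x y cx cy hx hy hsc (c+1) (by omega) (by omega) (by omega)
    rw [houtP c hcR x, houtP c hcR y] at h2
    omega
  -- ====== main conclusion ======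
  intro u huU
  by_contra hne
  set it : ℕ → X := fun k => f^[k] u with hit
  have hit0 : it 0 = u := rfl
  have hitsucc : ∀ k, it (k+1) = f (it k) := by
    intro k; simp only [hit, Function.iterate_succ_apply']
  have hitV : ∀ k, it k ∈ V := by
    intro k
    induction k with
    | zero => exact hUV huU
    | succ k ih => rw [hitsucc]; exact hfmem _ ih
  have hitscore : ∀ k, score (it k) = score u := by
    intro k
    induction k with
    | zero => rfl
    | succ k ih => rw [hitsucc, hscoref _ (hitV k), ih]
  -- two distinct elements of U never have the same score
  have key : ∀ v w : X, v ∈ U → w ∈ U → r v w → score v = score w → False := by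
    intro v w hv hw hvw hsc
    have hmem := hpscover v w hv hw hvw
    rcases List.mem_iff_getElem.1 hmem with ⟨j, hj, hjeq⟩
    have hjR : j < R := by rw [hlen]; exact hj
    have hb := bits v w 0 0 (hUP 0 hv) (hUP 0 hw) hsc j (by omega) (by omega) hjR
    have hpair := hpairs0 j hjR hj
    rw [hjeq] at hpair
    have h1 : out r (Tg j) v = (Tg j).card := by
      unfold out
      rw [Finset.filter_true_of_mem]
      intro e he
      exact (hpair e (by rwa [hTgget j hjR] at he)).1
    have h2 : out r (Tg j) w = 0 := by
      unfold out
      rw [Finset.card_eq_zero, Finset.filter_eq_empty_iff]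
      intro e he
      exact hasym _ _ (hpair e (by rwa [hTgget j hjR] at he)).2
    have hcard : (P j).card < (Tg j).card := hPsize j hjR
    omega
  have hitU : ∀ k, it k ∈ U → it k = u := by
    intro k hk
    by_contra hku
    rcases htot u (it k) (fun h => hku h.symm) with h | h
    · exact key u (it k) huU hk h (hitscore k).symm
    · exact key (it k) u hk huU h (hitscore k)
  have hlev : ∀ k, it k ≠ u → ∃ i, ∃ (_ : i < R), it k ∈ Tg i := by
    intro k hk
    rcases hmemV (it k) (hitV k) with h | h
    · exact absurd (hitU k h) hk
    · exact h
  have h1ne : it 1 ≠ u := by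
    rw [show it 1 = f u from by rw [hitsucc, hit0]]
    exact hne
  set K : Finset ℕ := (Finset.range R).filter (fun i => ∃ k, it k ∈ Tg i) with hK
  have hKne : K.Nonempty := by
    obtain ⟨i, hi, hik⟩ := hlev 1 h1ne
    exact ⟨i, Finset.mem_filter.2 ⟨Finset.mem_range.2 hi, 1, hik⟩⟩
  set jstar := K.max' hKne with hjstar
  have hjmem := K.max'_mem hKne
  have hjR : jstar < R := Finset.mem_range.1 (Finset.mem_filter.1 hjmem).1
  obtain ⟨kstar, hkstar⟩ : ∃ k, it k ∈ Tg jstar := (Finset.mem_filter.1 hjmem).2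
  -- uniqueness of orbit elements inside the top block
  have huniq : ∀ k k', it k ∈ Tg jstar → it k' ∈ Tg jstar → it k = it k' := by
    intro k k' hk hk'
    have hpre : out r (P jstar) (it k) = out r (P jstar) (it k') := by
      unfold out
      congr 1
      apply Finset.filter_congr
      intro p hp
      rcases hPunif jstar hjR p hp with h | h
      · constructor
        · intro hr; exact absurd (h _ hk) (hasym _ _ hr)
        · intro hr; exact absurd (h _ hk') (hasym _ _ hr)
      · exact ⟨fun _ => h _ hk', fun _ => h _ hk⟩
    have hx1 : it k ∈ P (jstar + 1) := hTgP jstar hjR hk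
    have hy1 : it k' ∈ P (jstar + 1) := hTgP jstar hjR hk'
    have hsc : score (it k) = score (it k') := by
      rw [hitscore k, hitscore k']
    have h2 := peel (R - (jstar+1)) (it k) (it k') (jstar+1) (jstar+1) hx1 hy1 hsc
      (jstar+1) le_rfl le_rfl (by omega)
    rw [houtP jstar hjR (it k), houtP jstar hjR (it k'), hpre] at h2
    have h3 : out r (Tg jstar) (it k) = out r (Tg jstar) (it k') := by omega
    obtain ⟨l, hlpw, hlT⟩ := hchains (Ts[jstar]'(by omega)) (List.getElem_mem _)
    have hTl : Tg jstar = l.toFinset := by rw [hTgget jstar hjR, hlT]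
    refine chain_out_inj r hirr hasym l hlpw (it k) ?_ (it k') ?_ ?_
    · rw [← List.mem_toFinset, ← hTl]; exact hk
    · rw [← List.mem_toFinset, ← hTl]; exact hk'
    · rw [← hTl]; exact h3
  have hne_tu : it kstar ≠ u := by
    intro heq
    have h4 := Finset.disjoint_left.1 (hPdisj jstar hjR) (hUP jstar huU)
    rw [← heq] at h4
    exact h4 hkstar
  -- every other orbit element lies in the prefix P jstar
  have hlow : ∀ k, it k ≠ it kstar → it k ∈ P jstar := by
    intro k hk
    rcases eq_or_ne (it k) u with heq | hne'
    · rw [heq]; exact hUP jstar huU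
    · obtain ⟨i, hi, hik⟩ := hlev k hne'
      have hle : i ≤ jstar :=
        K.le_max' i (Finset.mem_filter.2 ⟨Finset.mem_range.2 hi, k, hik⟩)
      rcases eq_or_ne i jstar with rfl | hij
      · exact absurd (huniq k kstar hik hkstar) hk
      · exact hPmono (by omega) (hTgP i hi hik)
  have hbits : ∀ k, it k ≠ it kstar →
      out r (Tg jstar) (it k) = out r (Tg jstar) u := by
    intro k hk
    have hu0 : u ∈ P jstar := hUP jstar huU
    exact bits (it k) u jstar jstar (hlow k hk) hu0 (hitscore k)
      jstar le_rfl le_rfl hjR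
  -- all other orbit elements relate to (it kstar) in the same direction
  have hdir : (∀ k, it k ≠ it kstar → r (it k) (it kstar)) ∨
      (∀ k, it k ≠ it kstar → r (it kstar) (it k)) := by
    rcases hbit jstar hjR u (hUP jstar huU) with h0 | hfull
    · refine Or.inr ?_
      intro k hk
      have hb := (hbits k hk).trans h0
      have hnot : ¬ r (it k) (it kstar) := by
        intro hr
        have h5 : it kstar ∈ (Tg jstar).filter (fun e => r (it k) e) :=
          Finset.mem_filter.2 ⟨hkstar, hr⟩
        rw [show (Tg jstar).filter (fun e => r (it k) e) = ∅ from
          Finset.card_eq_zero.1 hb] at h5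
        exact absurd h5 (Finset.notMem_empty _)
      rcases htot (it kstar) (it k) (fun h => hk h.symm) with h | h
      · exact h
      · exact absurd h hnot
    · refine Or.inl ?_
      intro k hk
      have hb := (hbits k hk).trans hfull
      have hfl : (Tg jstar).filter (fun e => r (it k) e) = Tg jstar :=
        Finset.eq_of_subset_of_card_le (Finset.filter_subset _ _) (le_of_eq hb.symm)
      have h5 : it kstar ∈ (Tg jstar).filter (fun e => r (it k) e) := by
        rw [hfl]; exact hkstar
      exact (Finset.mem_filter.1 h5).2
  -- the top element is fixed by f, contradiction
  have hftstar : f (it kstar) = it kstar := by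
    by_contra hft
    have hftO : f (it kstar) = it (kstar + 1) := (hitsucc kstar).symm
    have hks1 : 1 ≤ kstar := by
      rcases Nat.eq_zero_or_pos kstar with h0 | h0
      · exfalso; apply hne_tu; rw [h0, hit0]
      · omega
    have hprev : f (it (kstar - 1)) = it kstar := by
      rw [← hitsucc]; congr 1; omega
    have hprevne : it (kstar - 1) ≠ it kstar := by
      intro heq
      rw [heq] at hprev
      exact hft hprev
    have hnextne : it (kstar + 1) ≠ it kstar := by
      rw [← hftO]; exact hft
    rcases hdir with hd | hd
    · have h1 : r (it (kstar+1)) (it kstar) := hd (kstar+1) hnextne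
      have h2 : r (it (kstar-1)) (it kstar) := hd (kstar-1) hprevne
      have h3 := hfr _ _ h2
      rw [hprev, hftO] at h3
      exact hasym _ _ h3 h1
    · have h1 : r (it kstar) (it (kstar+1)) := hd (kstar+1) hnextne
      have h2 : r (it kstar) (it (kstar-1)) := hd (kstar-1) hprevne
      have h3 := hfr _ _ h2
      rw [hprev, hftO] at h3
      exact hasym _ _ h3 h1
  have hstep : it (kstar + 1) = it kstar := by rw [hitsucc, hftstar]
  have hfin : f u = u := by
    have h5 : f^[kstar] (f u) = f^[kstar] u := by
      rw [← Function.iterate_succ_apply]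
      exact hstep
    exact (hinj.iterate kstar) h5
  exact hne hfin

end Stmt18Aux

/-- a 2-homogeneous not 2-transitive group on infinite X preserves a tournament
    whose arc set is a G-orbit on ordered pairs of distinct elements, and acts locally
    rigidly. -/
theorem stmt18 {X : Type*} [Infinite X] [DecidableEq X] (G : Subgroup (Equiv.Perm X))
    (h2hom : ∀ s t : Finset X, s.card = 2 → t.card = 2 → ∃ g ∈ G, s.image g = t)
    (hnot2t : ¬ ∀ a b c d : X, a ≠ b → c ≠ d → ∃ g ∈ G, g a = c ∧ g b = d) :
    (∃ r : X → X → Prop, IsTournament r ∧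
      (∀ g ∈ G, ∀ x y : X, r x y ↔ r (g x) (g y)) ∧
      ∀ a b c d : X, r a b → r c d → ∃ g ∈ G, g a = c ∧ g b = d) ∧
    (∀ U : Finset X, ∃ V : Finset X, U ⊆ V ∧
      ∀ g ∈ G, V.image g = V → ∀ x ∈ U, g x = x) := by
  classical
  push_neg at hnot2t
  obtain ⟨a, b, c, d, hab, hcd, hnog⟩ := hnot2t
  -- the relation: orbit of the pair (a,b)
  set r : X → X → Prop := fun x y => ∃ g ∈ G, g a = x ∧ g b = y with hr
  -- 2-homogeneity in the pair form
  have pair2hom : ∀ x y : X, x ≠ y → ∃ g ∈ G,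
      (g a = x ∧ g b = y) ∨ (g a = y ∧ g b = x) := by
    intro x y hxy
    obtain ⟨g, hg, himg⟩ := h2hom {a, b} {x, y}
      (Finset.card_pair hab) (Finset.card_pair hxy)
    have hga : g a ∈ ({x, y} : Finset X) := by
      rw [← himg]; exact Finset.mem_image_of_mem _ (by simp)
    have hgb : g b ∈ ({x, y} : Finset X) := by
      rw [← himg]; exact Finset.mem_image_of_mem _ (by simp)
    have hgab : g a ≠ g b := fun h => hab (g.injective h)
    simp only [Finset.mem_insert, Finset.mem_singleton] at hga hgb
    rcases hga with h1 | h1 <;> rcases hgb with h2 | h2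
    · exact absurd (h1.trans h2.symm) hgab
    · exact ⟨g, hg, Or.inl ⟨h1, h2⟩⟩
    · exact ⟨g, hg, Or.inr ⟨h1, h2⟩⟩
    · exact absurd (h1.trans h2.symm) hgab
  have hirr : ∀ x, ¬ r x x := by
    rintro x ⟨g, hg, h1, h2⟩
    exact hab (g.injective (h1.trans h2.symm))
  have htot : ∀ x y : X, x ≠ y → r x y ∨ r y x := by
    intro x y hxy
    obtain ⟨g, hg, h | h⟩ := pair2hom x y hxy
    · exact Or.inl ⟨g, hg, h⟩
    · exact Or.inr ⟨g, hg, h⟩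
  have hasym : ∀ x y : X, r x y → ¬ r y x := by
    rintro x y ⟨g₁, hg₁, h₁a, h₁b⟩ ⟨g₂, hg₂, h₂a, h₂b⟩
    have hxy : x ≠ y := by
      rintro rfl
      exact hab (g₁.injective (h₁a.trans h₁b.symm))
    -- q swaps x and y
    set q := g₁ * g₂⁻¹ with hq
    have hqG : q ∈ G := mul_mem hg₁ (inv_mem hg₂)
    have hqx : q x = y := by
      have : g₂⁻¹ x = b := by rw [← h₂b]; simp
      rw [hq, Equiv.Perm.mul_apply, this, h₁b]
    have hqy : q y = x := by
      have : g₂⁻¹ y = a := by rw [← h₂a]; simp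
      rw [hq, Equiv.Perm.mul_apply, this, h₁a]
    -- e maps {x,y} to {c,d}
    obtain ⟨e, he, himg⟩ := h2hom {x, y} {c, d}
      (Finset.card_pair hxy) (Finset.card_pair hcd)
    -- s swaps c and d
    set s := e * q * e⁻¹ with hs
    have hsG : s ∈ G := mul_mem (mul_mem he hqG) (inv_mem he)
    have hex : e x ∈ ({c, d} : Finset X) := by
      rw [← himg]; exact Finset.mem_image_of_mem _ (by simp)
    have hey : e y ∈ ({c, d} : Finset X) := by
      rw [← himg]; exact Finset.mem_image_of_mem _ (by simp)
    have hexy : e x ≠ e y := fun h => hxy (e.injective h)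
    have hscd : s c = d ∧ s d = c := by
      simp only [Finset.mem_insert, Finset.mem_singleton] at hex hey
      have hsx : s (e x) = e y := by simp [hs, hqx]
      have hsy : s (e y) = e x := by simp [hs, hqy]
      rcases hex with h1 | h1 <;> rcases hey with h2 | h2
      · exact absurd (h1.trans h2.symm) hexy
      · rw [h1, h2] at hsx hsy; exact ⟨hsx, hsy⟩
      · rw [h1, h2] at hsx hsy; exact ⟨hsy, hsx⟩
      · exact absurd (h1.trans h2.symm) hexy
    -- now find g ∈ G with g a = c, g b = d, contradiction
    obtain ⟨h, hh, hha, hhb⟩ : ∃ h ∈ G, h a = d ∧ h b = c := by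
      rcases pair2hom c d hcd with ⟨p, hp, ⟨h1, h2⟩ | ⟨h1, h2⟩⟩
      · exact (hnog p hp h1 h2).elim
      · exact ⟨p, hp, h1, h2⟩
    refine hnog (s * h) (mul_mem hsG hh) ?_ ?_
    · show s (h a) = c; rw [hha, hscd.2]
    · show s (h b) = d; rw [hhb, hscd.1]
  have htourn : IsTournament r := by
    refine ⟨hirr, fun x y hxy => ⟨fun h => hasym x y h, fun h => ?_⟩⟩
    exact (htot x y hxy).resolve_right h
  have hinv : ∀ g ∈ G, ∀ x y : X, r x y ↔ r (g x) (g y) := by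
    intro g hg x y
    constructor
    · rintro ⟨g₁, hg₁, h1, h2⟩
      exact ⟨g * g₁, mul_mem hg hg₁, by simp [h1], by simp [h2]⟩
    · rintro ⟨g₁, hg₁, h1, h2⟩
      refine ⟨g⁻¹ * g₁, mul_mem (inv_mem hg) hg₁, ?_, ?_⟩
      · show g⁻¹ (g₁ a) = x; rw [h1]; simp
      · show g⁻¹ (g₁ b) = y; rw [h2]; simp
  have harc : ∀ x y z w : X, r x y → r z w → ∃ g ∈ G, g x = z ∧ g y = w := by
    rintro x y z w ⟨g₁, hg₁, h1a, h1b⟩ ⟨g₂, hg₂, h2a, h2b⟩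
    refine ⟨g₂ * g₁⁻¹, mul_mem hg₂ (inv_mem hg₁), ?_, ?_⟩
    · show g₂ (g₁⁻¹ x) = z
      have : g₁⁻¹ x = a := by rw [← h1a]; simp
      rw [this, h2a]
    · show g₂ (g₁⁻¹ y) = w
      have : g₁⁻¹ y = b := by rw [← h1b]; simp
      rw [this, h2b]
  -- between sets are infinite
  have hbetween : ∀ x y : X, r x y → {w | r x w ∧ r w y}.Infinite := by
    intro x y hxy
    by_contra hfin
    rw [Set.not_infinite] at hfin
    set F := hfin.toFinset with hF
    set m := F.card + 3 with hm
    obtain ⟨l, hlen, hpw, -⟩ := Stmt18Aux.exists_chain r htot m Set.univ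
      Set.infinite_univ
    have hnd : l.Nodup := Stmt18Aux.chain_nodup r hirr hpw
    have h0 : 0 < l.length := by omega
    have hlast : m - 1 < l.length := by omega
    have hpg : ∀ i j (hi : i < l.length) (hj : j < l.length), i < j →
        r (l[i]'hi) (l[j]'hj) := by
      intro i j hi hj hij
      exact List.pairwise_iff_getElem.1 hpw i j hi hj hij
    have hhead : r (l[0]'h0) (l[m-1]'hlast) := hpg 0 (m-1) h0 hlast (by omega)
    obtain ⟨g, hg, hga, hgb⟩ := harc _ _ _ _ hhead hxy
    -- the m-2 middle elements map into F
    have hmaps : ∀ i ∈ Finset.range (m - 2), g (l.getD (i+1) x) ∈ F := by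
      intro i hi
      rw [Finset.mem_range] at hi
      have hi1 : i + 1 < l.length := by omega
      rw [List.getD_eq_getElem l x hi1]
      have h1 : r (l[0]'h0) (l[i+1]'hi1) := hpg 0 (i+1) h0 hi1 (by omega)
      have h2 : r (l[i+1]'hi1) (l[m-1]'hlast) := hpg (i+1) (m-1) hi1 hlast (by omega)
      have hw1 : r x (g (l[i+1]'hi1)) := by
        rw [← hga]; exact (hinv g hg _ _).1 h1
      have hw2 : r (g (l[i+1]'hi1)) y := by
        rw [← hgb]; exact (hinv g hg _ _).1 h2
      rw [hF, Set.Finite.mem_toFinset]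
      exact ⟨hw1, hw2⟩
    have hcard : F.card < (Finset.range (m - 2)).card := by
      rw [Finset.card_range]; omega
    obtain ⟨i, hi, j, hj, hij, heq⟩ :=
      Finset.exists_ne_map_eq_of_card_lt_of_maps_to hcard hmaps
    rw [Finset.mem_range] at hi hj
    have hi1 : i + 1 < l.length := by omega
    have hj1 : j + 1 < l.length := by omega
    rw [List.getD_eq_getElem l x hi1, List.getD_eq_getElem l x hj1] at heq
    have := g.injective heq
    have := (List.Nodup.getElem_inj_iff hnd).1 this
    omega
  refine ⟨⟨r, htourn, hinv, harc⟩, ?_⟩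
  -- PART 2: local rigidity
  intro U
  obtain ⟨V, hUV, hVrig⟩ := Stmt18Aux.rigid r hirr hasym htot hbetween U
  refine ⟨V, hUV, ?_⟩
  intro g hg hgV x hx
  exact hVrig g g.injective (fun p q hpq => (hinv g hg p q).1 hpq) hgV x hx
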